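/- Let 0 < s < 1, k > 0. Then the 1D remainder kernel J(x) := (1/(π|x|^{1−2s})) ∫₀^∞ Im[ e^{−y} / (y^{2s} e^{iπs} − k^{2s}|x|^{2s}) ] dy satisfies |J(x)| ≤ C(s,k) |x|^{−1−2s} for all x ≠ 0, where C(s,k) = (sin(sπ)/(π k^{4s}(1−cos(sπ)²))) Γ(2s+1). -/

import Mathlib

open Real MeasureTheory

theorem stmt12 (s k x : ℝ) (hs0 : 0 < s) (hs1 : s < 1) (hk : 0 < k) (hx : x ≠ 0) :
    |(1 / (π * |x| ^ (1 - 2*s))) *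
        ∫ y in Set.Ioi (0:ℝ),
          (Complex.exp (-(y:ℂ)) /
            (((y ^ (2*s) : ℝ) : ℂ) * Complex.exp (((π * s : ℝ) : ℂ) * Complex.I)
              - ((k ^ (2*s) * |x| ^ (2*s) : ℝ) : ℂ))).im|
      ≤ (Real.sin (s*π) / (π * k^(4*s) * (1 - Real.cos (s*π)^2))) * Real.Gamma (2*s+1)
          * |x| ^ (-(1 + 2*s)) := by
  have hX : 0 < |x| := abs_pos.mpr hx
  have hπ := Real.pi_pos
  have hθpos : 0 < π * s := mul_pos hπ hs0
  have hθlt : π * s < π := by nlinarith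
  have hsin : 0 < Real.sin (π * s) := Real.sin_pos_of_pos_of_lt_pi hθpos hθlt
  have hcos2 : Real.cos (π * s) ^ 2 < 1 := by
    nlinarith [Real.sin_sq_add_cos_sq (π * s)]
  set a := k ^ (2*s) * |x| ^ (2*s) with ha
  have hapos : 0 < a := mul_pos (Real.rpow_pos_of_pos hk _) (Real.rpow_pos_of_pos hX _)
  set C' := Real.sin (π * s) / (a^2 * (1 - Real.cos (π * s) ^ 2)) with hC'
  have hC'pos : 0 < C' := by
    apply div_pos hsin
    apply mul_pos (by positivity)
    linarith
  -- pointwise bound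
  have hb : ∀ y ∈ Set.Ioi (0:ℝ),
      |(Complex.exp (-(y:ℂ)) /
          (((y ^ (2*s) : ℝ) : ℂ) * Complex.exp (((π * s : ℝ) : ℂ) * Complex.I)
            - ((k ^ (2*s) * |x| ^ (2*s) : ℝ) : ℂ))).im|
        ≤ C' * (Real.exp (-y) * y ^ (2*s)) := by
    intro y hy
    have hy0 : 0 < y := hy
    set r := y ^ (2*s) with hr
    have hr0 : 0 < r := Real.rpow_pos_of_pos hy0 _
    have him : (Complex.exp (-(y:ℂ)) /
          (((r : ℝ) : ℂ) * Complex.exp (((π * s : ℝ) : ℂ) * Complex.I) - ((a : ℝ) : ℂ))).im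
        = -(Real.exp (-y) * (r * Real.sin (π * s)))
            / ((r * Real.cos (π * s) - a)^2 + (r * Real.sin (π * s))^2) := by
      rw [show (-(y:ℂ)) = ((-y : ℝ) : ℂ) by push_cast; ring, ← Complex.ofReal_exp]
      simp only [Complex.div_im, Complex.sub_re, Complex.sub_im, Complex.mul_re,
        Complex.mul_im, Complex.ofReal_re, Complex.ofReal_im,
        Complex.exp_ofReal_mul_I_re, Complex.exp_ofReal_mul_I_im, Complex.normSq_apply,
        zero_mul, mul_zero, sub_zero, zero_sub, add_zero, zero_add]
      ring
    rw [him]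
    have hN : a^2 * (1 - Real.cos (π * s)^2)
        ≤ (r * Real.cos (π * s) - a)^2 + (r * Real.sin (π * s))^2 := by
      nlinarith [sq_nonneg (r - a * Real.cos (π * s)), Real.sin_sq_add_cos_sq (π * s)]
    have hNpos : 0 < a^2 * (1 - Real.cos (π * s)^2) := mul_pos (by positivity) (by linarith)
    rw [abs_div, abs_neg, abs_of_nonneg (by positivity : (0:ℝ) ≤ Real.exp (-y) * (r * Real.sin (π*s))),
      abs_of_pos (lt_of_lt_of_le hNpos hN)]
    rw [div_le_iff₀ (lt_of_lt_of_le hNpos hN), hC', div_mul_eq_mul_div, div_mul_eq_mul_div,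
      le_div_iff₀ hNpos]
    have he : 0 ≤ Real.exp (-y) := (Real.exp_pos _).le
    nlinarith [mul_le_mul_of_nonneg_left hN (by positivity : (0:ℝ) ≤ Real.sin (π*s) * (Real.exp (-y) * r))]
  -- integrability of the dominating function
  have hGint : IntegrableOn (fun y : ℝ => Real.exp (-y) * y ^ (2*s)) (Set.Ioi 0) := by
    have := Real.GammaIntegral_convergent (by linarith : (0:ℝ) < 2*s + 1)
    simpa using this
  have hGval : ∫ y in Set.Ioi (0:ℝ), Real.exp (-y) * y ^ (2*s) = Real.Gamma (2*s+1) := by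
    rw [Real.Gamma_eq_integral (by linarith : (0:ℝ) < 2*s + 1)]
    norm_num
  -- bound the integral
  have hIb : |∫ y in Set.Ioi (0:ℝ),
      (Complex.exp (-(y:ℂ)) /
        (((y ^ (2*s) : ℝ) : ℂ) * Complex.exp (((π * s : ℝ) : ℂ) * Complex.I)
          - ((k ^ (2*s) * |x| ^ (2*s) : ℝ) : ℂ))).im|
      ≤ C' * Real.Gamma (2*s+1) := by
    calc _ ≤ ∫ y in Set.Ioi (0:ℝ), |(Complex.exp (-(y:ℂ)) /
        (((y ^ (2*s) : ℝ) : ℂ) * Complex.exp (((π * s : ℝ) : ℂ) * Complex.I)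
          - ((k ^ (2*s) * |x| ^ (2*s) : ℝ) : ℂ))).im| := by
          simpa [Real.norm_eq_abs] using
            MeasureTheory.norm_integral_le_integral_norm (μ := volume.restrict (Set.Ioi 0))
              (f := fun y : ℝ => (Complex.exp (-(y:ℂ)) /
                (((y ^ (2*s) : ℝ) : ℂ) * Complex.exp (((π * s : ℝ) : ℂ) * Complex.I)
                  - ((k ^ (2*s) * |x| ^ (2*s) : ℝ) : ℂ))).im)
      _ ≤ ∫ y in Set.Ioi (0:ℝ), C' * (Real.exp (-y) * y ^ (2*s)) := by
          apply MeasureTheory.integral_mono_of_nonneg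
          · filter_upwards with y using abs_nonneg _
          · exact (hGint.const_mul C')
          · filter_upwards [ae_restrict_mem measurableSet_Ioi] with y hy using hb y hy
      _ = C' * Real.Gamma (2*s+1) := by rw [MeasureTheory.integral_const_mul, hGval]
  -- final arithmetic
  rw [abs_mul]
  have hfac : 0 < π * |x| ^ (1 - 2*s) := mul_pos hπ (Real.rpow_pos_of_pos hX _)
  rw [abs_of_pos (by positivity : (0:ℝ) < 1 / (π * |x| ^ (1 - 2*s)))]
  have step : (1 / (π * |x| ^ (1 - 2*s))) * |∫ y in Set.Ioi (0:ℝ),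
      (Complex.exp (-(y:ℂ)) /
        (((y ^ (2*s) : ℝ) : ℂ) * Complex.exp (((π * s : ℝ) : ℂ) * Complex.I)
          - ((k ^ (2*s) * |x| ^ (2*s) : ℝ) : ℂ))).im|
      ≤ (1 / (π * |x| ^ (1 - 2*s))) * (C' * Real.Gamma (2*s+1)) :=
    mul_le_mul_of_nonneg_left hIb (by positivity)
  refine step.trans_eq ?_
  have hk4 : k ^ (4*s) = k ^ (2*s) * k ^ (2*s) := by
    rw [← Real.rpow_add hk]; ring_nf
  have hx4 : |x| ^ (4*s) = |x| ^ (2*s) * |x| ^ (2*s) := by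
    rw [← Real.rpow_add hX]; ring_nf
  have hxm : |x| ^ (-(1 + 2*s)) = 1 / (|x| ^ (1 - 2*s) * |x| ^ (4*s)) := by
    rw [← Real.rpow_add hX, Real.rpow_neg hX.le, one_div]
    ring_nf
  rw [hC', ha, hxm, hk4, hx4]
  rw [mul_comm s π]
  have h1 : (π * |x| ^ (1 - 2*s)) ≠ 0 := ne_of_gt hfac
  have h2 : |x| ^ (1 - 2*s) ≠ 0 := ne_of_gt (Real.rpow_pos_of_pos hX _)
  have h3 : k ^ (2*s) ≠ 0 := ne_of_gt (Real.rpow_pos_of_pos hk _)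
  have h4 : |x| ^ (2*s) ≠ 0 := ne_of_gt (Real.rpow_pos_of_pos hX _)
  have h5 : (1 - Real.cos (π * s) ^ 2) ≠ 0 := by nlinarith
  have h6 : π ≠ 0 := ne_of_gt hπ
  field_simp
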